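/- No online algorithm can achieve discrepancy strictly less than 11/10 in the setting of non-identical distributions: let S be a 5-element set and let π₁ = π₂ = π₃ be uniform on S. Then (i) for every choice of s₁, s₂, s₃ in S there exist two distinct elements i, j ∈ S with N₃(i) = N₃(j) = 0, so that N₃(i) − P₃(i) = N₃(j) − P₃(j) = −3/5; and (ii) if π₄ is taken to be uniform on {i, j} (i.e. π₄(i) = π₄(j) = 1/2 and π₄(s) = 0 otherwise), then for every choice of s₄ ∈ S there exists s ∈ S with N₄(s) − P₄(s) = −11/10. -/

import Mathlib

/-- Online lower bound on a 5-element set `S` with `π₁ = π₂ = π₃` uniform (so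
`P₃(s) = 3/5`): (i) for any `s₁, s₂, s₃` there are distinct `i ≠ j` unvisited, giving
`N₃(i) - P₃(i) = N₃(j) - P₃(j) = -3/5`; (ii) if `π₄` is uniform on `{i, j}` (so
`P₄(s) = 3/5 + π₄(s)`), then for any choice of `s₄` some `s ∈ S` has
`N₄(s) - P₄(s) = -11/10`. -/
theorem stmt_11 {S : Type*} [Fintype S] [DecidableEq S] (hcard : Fintype.card S = 5) :
    (∀ s1 s2 s3 : S, ∃ i j : S, i ≠ j ∧
        [s1, s2, s3].count i = 0 ∧ [s1, s2, s3].count j = 0 ∧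
        ([s1, s2, s3].count i : ℝ) - 3 / 5 = -(3 / 5) ∧
        ([s1, s2, s3].count j : ℝ) - 3 / 5 = -(3 / 5)) ∧
    (∀ s1 s2 s3 i j : S, i ≠ j →
        [s1, s2, s3].count i = 0 → [s1, s2, s3].count j = 0 →
        ∀ s4 : S, ∃ s : S,
          ([s1, s2, s3, s4].count s : ℝ)
            - (3 / 5 + (if s = i ∨ s = j then (1 / 2 : ℝ) else 0)) = -(11 / 10)) := by
  constructor
  · intro s1 s2 s3
    have hlt : 1 < ({s1, s2, s3} : Finset S)ᶜ.card := by
      have h1 : ({s1, s2, s3} : Finset S).card ≤ 3 := by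
        have h2 := Finset.card_insert_le s1 ({s2, s3} : Finset S)
        have h3 := Finset.card_insert_le s2 ({s3} : Finset S)
        simp only [Finset.card_singleton] at *
        omega
      have h2 := Finset.card_compl_add_card ({s1, s2, s3} : Finset S)
      omega
    obtain ⟨i, hi, j, hj, hij⟩ := Finset.one_lt_card.mp hlt
    simp only [Finset.mem_compl, Finset.mem_insert, Finset.mem_singleton, not_or] at hi hj
    refine ⟨i, j, hij, ?_, ?_, ?_, ?_⟩ <;>
      simp [List.count_cons, hi.1, hi.2.1, hi.2.2, hj.1, hj.2.1, hj.2.2, Ne.symm hi.1, Ne.symm hi.2.1, Ne.symm hi.2.2, Ne.symm hj.1, Ne.symm hj.2.1, Ne.symm hj.2.2] <;> norm_num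
  · intro s1 s2 s3 i j hij hci hcj s4
    simp only [List.count_eq_zero, List.mem_cons, List.not_mem_nil, or_false, not_or] at hci hcj
    by_cases h4 : s4 = i
    · refine ⟨j, ?_⟩
      have : s4 ≠ j := by rw [h4]; exact hij
      simp [List.count_cons, hcj.1, hcj.2.1, hcj.2.2, (Ne.symm this), this, Ne.symm hcj.1, Ne.symm hcj.2.1, Ne.symm hcj.2.2]
      norm_num
    · refine ⟨i, ?_⟩
      simp [List.count_cons, hci.1, hci.2.1, hci.2.2, h4, Ne.symm hci.1, Ne.symm hci.2.1, Ne.symm hci.2.2]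
      norm_num
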